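/- Let $I$ be an ideal of $B = \mathbb{C}[z,z^{-1}][[q]]$ such that $I \subseteq ((z-1)^2)$ and such that the comultiplication $\Delta: B \to B \,\hat\otimes\, B \cong \mathbb{C}[z_1^{\pm},z_2^{\pm}][[q]]$, $z \mapsto z_1 z_2$, satisfies $\Delta(I) \subseteq I\otimes B + B\otimes I$. Then $I \subseteq ((z-1)^n)$ for all $n \geq 1$, and hence $I = 0$. -/

import Mathlib

noncomputable section
set_option maxHeartbeats 1000000
set_option synthInstance.maxHeartbeats 400000

/-- The Hopf algebra `B = ℂ[z,z⁻¹][[q]]`. -/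
abbrev BH : Type := PowerSeries (LaurentPolynomial ℂ)

/-- The ring `ℂ[z₁^±, z₂^±][[q]]`, the (completed) tensor square of `B`. -/
abbrev BH2 : Type := PowerSeries (AddMonoidAlgebra ℂ (ℤ × ℤ))

/-- The element `z` of `B`. -/
def zB : BH := PowerSeries.C (LaurentPolynomial.T 1)

/-- The comultiplication `Δ : B → B ⊗ B`, `z ↦ z₁ z₂`, induced by the diagonal
`ℤ →+ ℤ × ℤ`. -/
def Δh : BH →+* BH2 :=
  PowerSeries.map
    (AddMonoidAlgebra.mapDomainRingHom ℂ
      ({ toFun := fun n : ℤ => (n, n), map_zero' := rfl,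
         map_add' := fun _ _ => rfl } : ℤ →+ ℤ × ℤ))

/-- The first inclusion `B → B ⊗ B`, `z ↦ z₁`. -/
def ι1 : BH →+* BH2 := PowerSeries.map (AddMonoidAlgebra.mapDomainRingHom ℂ (AddMonoidHom.inl ℤ ℤ))

/-- The second inclusion `B → B ⊗ B`, `z ↦ z₂`. -/
def ι2 : BH →+* BH2 := PowerSeries.map (AddMonoidAlgebra.mapDomainRingHom ℂ (AddMonoidHom.inr ℤ ℤ))


open LaurentPolynomial TrivSqZeroExt PowerSeries

abbrev LL : Type := LaurentPolynomial ℂ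
abbrev DL : Type := TrivSqZeroExt LL LL
abbrev DD : Type := PowerSeries DL

def gmon : Multiplicative (ℤ × ℤ) →* DL where
  toFun p := inl (T p.toAdd.2) + inr (p.toAdd.1 • T p.toAdd.2)
  map_one' := by
    apply TrivSqZeroExt.ext <;> simp [T_zero]
  map_mul' p q := by
    apply TrivSqZeroExt.ext
    · simp only [fst_add, fst_inl, fst_inr, add_zero, fst_mul, toAdd_mul, Prod.snd_add, T_add]
    · simp only [snd_add, snd_inl, snd_inr, zero_add, snd_mul, fst_add, fst_inl, fst_inr,
        add_zero, op_smul_eq_smul, smul_eq_mul]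
      simp only [toAdd_mul, Prod.fst_add, Prod.snd_add, ← T_add]
      rw [mul_smul_comm, mul_comm, mul_smul_comm, ← T_add, add_smul, add_comm]
      rw [add_comm (Multiplicative.toAdd p).2]

def φ0 : AddMonoidAlgebra ℂ (ℤ × ℤ) →+* DL :=
  (AddMonoidAlgebra.lift ℂ DL (ℤ × ℤ) gmon).toRingHom

def Φ : BH2 →+* DD := PowerSeries.map φ0

def jH : BH →+* DD := PowerSeries.map (inlHom LL LL)
def fstH : DD →+* BH :=
  PowerSeries.map ((TrivSqZeroExt.fstHom ℂ LL LL : DL →ₐ[ℂ] LL) : DL →+* LL)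
def sndPS (x : DD) : BH := PowerSeries.mk fun k => (PowerSeries.coeff k x).snd
def eD : DD := PowerSeries.C (inr 1 : DL)

lemma φ0_single (p : ℤ × ℤ) (c : ℂ) :
    φ0 (AddMonoidAlgebra.single p c) = c • (inl (T p.2) + inr (p.1 • T p.2) : DL) := by
  simp [φ0, AddMonoidAlgebra.lift_single, gmon]

def diagA : ℤ →+ ℤ × ℤ :=
  { toFun := fun n : ℤ => (n, n), map_zero' := rfl, map_add' := fun _ _ => rfl }

lemma mapDomainRingHom_single {G H : Type} [AddMonoid G] [AddMonoid H] (f : G →+ H)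
    (a : G) (c : ℂ) :
    AddMonoidAlgebra.mapDomainRingHom ℂ f (AddMonoidAlgebra.single a c) =
      AddMonoidAlgebra.single (f a) c :=
  AddMonoidAlgebra.mapDomain_single

lemma base_diag : (((TrivSqZeroExt.fstHom ℂ LL LL : DL →ₐ[ℂ] LL) : DL →+* LL).comp
    (φ0.comp (AddMonoidAlgebra.mapDomainRingHom ℂ diagA))) = RingHom.id LL := by
  apply AddMonoidAlgebra.ringHom_ext
  · intro b
    simp only [RingHom.comp_apply, mapDomainRingHom_single, φ0_single, RingHom.id_apply, RingHom.coe_coe,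
      TrivSqZeroExt.fstHom_apply, fst_smul, fst_add, fst_inl, fst_inr, add_zero, diagA]
    show b • (T 0 : LL) = _
    rw [T_zero]
    show b • (AddMonoidAlgebra.single 0 1 : LL) = _
    rw [AddMonoidAlgebra.smul_single', mul_one]
  · intro a
    simp only [RingHom.comp_apply, mapDomainRingHom_single, φ0_single, RingHom.id_apply, RingHom.coe_coe,
      TrivSqZeroExt.fstHom_apply, fst_smul, fst_add, fst_inl, fst_inr, add_zero, diagA]
    show (1:ℂ) • (T a : LL) = _
    rw [one_smul]
    rfl

lemma sm1 (b : ℂ) : b • (T (0:ℤ) : LL) = AddMonoidAlgebra.single (0:ℤ) b := by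
  rw [T_zero]
  show b • (AddMonoidAlgebra.single 0 1 : LL) = _
  rw [AddMonoidAlgebra.smul_single', mul_one]

lemma base_inr : φ0.comp (AddMonoidAlgebra.mapDomainRingHom ℂ (AddMonoidHom.inr ℤ ℤ)) =
    inlHom LL LL := by
  apply AddMonoidAlgebra.ringHom_ext
  · intro b
    rw [RingHom.comp_apply, mapDomainRingHom_single, φ0_single]
    show b • (inl (T (0:ℤ)) + inr ((0:ℤ) • T (0:ℤ)) : DL) = inl (AddMonoidAlgebra.single (0:ℤ) b)
    rw [zero_smul, inr_zero, add_zero, ← inl_smul, sm1]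
  · intro a
    rw [RingHom.comp_apply, mapDomainRingHom_single, φ0_single]
    show (1:ℂ) • (inl (T a) + inr ((0:ℤ) • T a) : DL) = inl (AddMonoidAlgebra.single a 1)
    rw [zero_smul, inr_zero, add_zero, one_smul]
    rfl

lemma Φι2 (f : BH) : Φ (ι2 f) = jH f := by
  apply PowerSeries.ext
  intro k
  simp only [Φ, ι2, jH, PowerSeries.coeff_map]
  exact DFunLike.congr_fun base_inr _

lemma fstH_Δ (f : BH) : fstH (Φ (Δh f)) = f := by
  apply PowerSeries.ext
  intro k
  simp only [Φ, Δh, fstH, PowerSeries.coeff_map]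
  exact DFunLike.congr_fun base_diag _

lemma fstH_j (f : BH) : fstH (jH f) = f := by
  apply PowerSeries.ext
  intro k
  simp [fstH, jH, PowerSeries.coeff_map]

lemma sndPS_j (f : BH) : sndPS (jH f) = 0 := by
  apply PowerSeries.ext
  intro k
  simp [sndPS, jH, PowerSeries.coeff_map]

lemma eD_sq : eD * eD = 0 := by
  unfold eD
  rw [← map_mul, inr_mul_inr, map_zero]

lemma Φι1_zB : Φ (ι1 zB) = 1 + eD := by
  unfold Φ ι1 zB eD
  rw [PowerSeries.map_C, PowerSeries.map_C]
  show PowerSeries.C (φ0 ((AddMonoidAlgebra.mapDomainRingHom ℂ (AddMonoidHom.inl ℤ ℤ))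
    (AddMonoidAlgebra.single 1 1))) = _
  rw [mapDomainRingHom_single, φ0_single, one_smul]
  show PowerSeries.C (inl (T (0:ℤ)) + inr ((1:ℤ) • T (0:ℤ))) = _
  rw [T_zero, one_smul, inl_one, map_add, map_one]

lemma ΦΔ_zB : Φ (Δh zB) = jH zB + eD * jH zB := by
  unfold Φ Δh zB jH eD
  rw [PowerSeries.map_C, PowerSeries.map_C, PowerSeries.map_C, ← map_mul, ← map_add]
  show PowerSeries.C (φ0 ((AddMonoidAlgebra.mapDomainRingHom ℂ
      ({ toFun := fun n : ℤ => (n, n), map_zero' := rfl,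
         map_add' := fun _ _ => rfl } : ℤ →+ ℤ × ℤ))
    (AddMonoidAlgebra.single 1 1))) = _
  rw [mapDomainRingHom_single, φ0_single, one_smul]
  show PowerSeries.C (inl (T (1:ℤ)) + inr ((1:ℤ) • T (1:ℤ))) = _
  rw [one_smul]
  congr 1
  apply TrivSqZeroExt.ext <;> simp [inr_mul_inl, op_smul_eq_smul]

lemma binom {R : Type} [CommRing R] (a b : R) (hb : b * b = 0) (m : ℕ) :
    (a + b) ^ (m + 1) = a ^ (m + 1) + ((m : R) + 1) * a ^ m * b := by
  induction m with
  | zero => push_cast; ring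
  | succ n ih =>
    rw [pow_succ (a + b), ih]
    push_cast
    linear_combination ((n : R) + 1) * a ^ n * hb

lemma fstH_eD : fstH eD = 0 := by
  unfold fstH eD
  rw [PowerSeries.map_C]
  show PowerSeries.C (fst (inr 1 : DL)) = 0
  rw [fst_inr, map_zero]

lemma decomp (x : DD) : x = jH (fstH x) + eD * jH (sndPS x) := by
  apply PowerSeries.ext
  intro k
  rw [map_add]
  unfold eD
  rw [PowerSeries.coeff_C_mul]
  unfold jH fstH sndPS
  rw [PowerSeries.coeff_map, PowerSeries.coeff_map, PowerSeries.coeff_map,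
    PowerSeries.coeff_mk]
  apply TrivSqZeroExt.ext
  · simp
  · simp [inr_mul_inl, op_smul_eq_smul]

lemma fst_form (A B : BH) : fstH (jH A + eD * jH B) = A := by
  rw [map_add, map_mul, fstH_j, fstH_j, fstH_eD, zero_mul, add_zero]

lemma snd_form (A B : BH) : sndPS (jH A + eD * jH B) = B := by
  apply PowerSeries.ext
  intro k
  unfold sndPS eD jH
  rw [PowerSeries.coeff_mk, map_add, PowerSeries.coeff_C_mul, PowerSeries.coeff_map,
    PowerSeries.coeff_map]
  simp [inr_mul_inl, op_smul_eq_smul]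

lemma mul_form (c x : DD) :
    c * x = jH (fstH c * fstH x) + eD * jH (fstH c * sndPS x + sndPS c * fstH x) := by
  conv_lhs => rw [decomp c, decomp x]
  rw [map_mul, map_add, map_mul, map_mul]
  linear_combination (jH (sndPS c) * jH (sndPS x)) * eD_sq

lemma add_form (x y : DD) :
    x + y = jH (fstH x + fstH y) + eD * jH (sndPS x + sndPS y) := by
  conv_lhs => rw [decomp x, decomp y]
  rw [map_add, map_add]
  ring

lemma sndPS_zero : sndPS 0 = 0 := by
  have h := snd_form 0 0
  simpa using h

lemma sndPS_add (x y : DD) : sndPS (x + y) = sndPS x + sndPS y := by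
  conv_lhs => rw [add_form x y]
  rw [snd_form]

lemma sndPS_mul (c x : DD) :
    sndPS (c * x) = fstH c * sndPS x + sndPS c * fstH x := by
  conv_lhs => rw [mul_form c x]
  rw [snd_form]

def KK (I : Ideal BH) : Ideal DD where
  carrier := {x | fstH x ∈ I ∧ sndPS x ∈ I}
  zero_mem' := ⟨by rw [map_zero]; exact I.zero_mem, by rw [sndPS_zero]; exact I.zero_mem⟩
  add_mem' := fun hx hy => ⟨by rw [map_add]; exact I.add_mem hx.1 hy.1,
    by rw [sndPS_add]; exact I.add_mem hx.2 hy.2⟩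
  smul_mem' := fun c x hx => by
    refine ⟨?_, ?_⟩
    · show fstH (c * x) ∈ I
      rw [map_mul]
      exact I.mul_mem_left _ hx.1
    · show sndPS (c * x) ∈ I
      rw [sndPS_mul]
      exact I.add_mem (I.mul_mem_left _ hx.2) (I.mul_mem_left _ hx.1)

instance : NoZeroDivisors LL := inferInstance
instance LLdom : IsDomain LL := NoZeroDivisors.to_isDomain _
instance BHdom : IsDomain BH := inferInstance

lemma zB_sub_one_ne : zB - 1 ≠ 0 := by
  intro h
  rw [sub_eq_zero] at h
  have h1 : (T 1 : LL) = 1 := by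
    apply PowerSeries.C_injective (R := LL)
    rw [map_one]
    unfold zB at h
    exact h
  have h3 : (T 1 : LL).coeff 0 = (1 : LL).coeff 0 := by rw [h1]
  simp only [T_apply, AddMonoidAlgebra.one_def] at h3
  rw [AddMonoidAlgebra.coeff_single, Finsupp.single_apply] at h3
  simp at h3

lemma main_step (I : Ideal BH)
    (hI2 : I ≤ Ideal.span {(zB - 1) ^ 2})
    (hΔ : ∀ f ∈ I, Δh f ∈ Ideal.span (ι1 '' (I : Set BH)) ⊔ Ideal.span (ι2 '' (I : Set BH)))
    (m' : ℕ) (ih : I ≤ Ideal.span {(zB - 1) ^ (m' + 1)}) :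
    I ≤ Ideal.span {(zB - 1) ^ (m' + 2)} := by
  intro f hf
  obtain ⟨g, hg⟩ := Ideal.mem_span_singleton.mp (ih hf)
  have hK : Φ (Δh f) ∈ KK I := by
    have hle : Ideal.span (ι1 '' (I : Set BH)) ⊔ Ideal.span (ι2 '' (I : Set BH)) ≤
        Ideal.comap Φ (KK I) := by
      apply sup_le <;> rw [Ideal.span_le] <;> rintro x ⟨y, hy, rfl⟩
      · show Φ (ι1 y) ∈ KK I
        have h0 : Φ (ι1 y) = 0 := by
          obtain ⟨k, hk⟩ := Ideal.mem_span_singleton.mp (hI2 hy)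
          rw [hk, map_mul, map_mul, map_pow, map_pow, map_sub, map_sub, map_one, map_one,
            Φι1_zB]
          have : (1 + eD - 1) ^ 2 = 0 := by
            have := eD_sq
            ring_nf
            linear_combination eD_sq
          rw [this, zero_mul]
        rw [h0]
        exact (KK I).zero_mem
      · show Φ (ι2 y) ∈ KK I
        rw [Φι2]
        exact ⟨by rw [fstH_j]; exact hy, by rw [sndPS_j]; exact I.zero_mem⟩
    exact hle (hΔ f hf)
  set v := sndPS (Φ (Δh g)) with hv
  have hdg : Φ (Δh g) = jH g + eD * jH v := by
    conv_lhs => rw [decomp (Φ (Δh g))]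
    rw [fstH_Δ]
  have hb : (eD * jH zB) * (eD * jH zB) = 0 := by
    linear_combination (jH zB * jH zB) * eD_sq
  have key : Φ (Δh f) = jH ((zB - 1) ^ (m' + 1) * g) +
      eD * jH ((zB - 1) ^ (m' + 1) * v + ((m' : BH) + 1) * (zB * ((zB - 1) ^ m' * g))) := by
    rw [hg, map_mul, map_mul, map_pow, map_pow, map_sub, map_sub, map_one, map_one, ΦΔ_zB, hdg]
    have harr : jH zB + eD * jH zB - 1 = jH (zB - 1) + eD * jH zB := by
      rw [map_sub, map_one]; ring
    rw [harr, binom _ _ hb m']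
    simp only [map_mul, map_pow, map_add, map_sub, map_one, map_natCast]
    linear_combination (((m' : DD) + 1) * (jH zB - 1) ^ m' * jH zB * jH v) * eD_sq
  have hsnd : sndPS (Φ (Δh f)) =
      (zB - 1) ^ (m' + 1) * v + ((m' : BH) + 1) * (zB * ((zB - 1) ^ m' * g)) := by
    rw [key, snd_form]
  have hmem : (zB - 1) ^ (m' + 1) * v + ((m' : BH) + 1) * (zB * ((zB - 1) ^ m' * g)) ∈
      Ideal.span {(zB - 1) ^ (m' + 1)} := by
    rw [← hsnd]
    exact ih hK.2
  have h2 : ((m' : BH) + 1) * (zB * ((zB - 1) ^ m' * g)) ∈ Ideal.span {(zB - 1) ^ (m' + 1)} := by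
    have hsub : (zB - 1) ^ (m' + 1) * v ∈ Ideal.span {(zB - 1) ^ (m' + 1)} :=
      Ideal.mul_mem_right _ _ (Ideal.subset_span rfl)
    simpa using Ideal.sub_mem _ hmem hsub
  have hdvd : (zB - 1) ^ (m' + 1) ∣ (((m' : BH) + 1) * zB) * ((zB - 1) ^ m' * g) := by
    have := Ideal.mem_span_singleton.mp h2
    rwa [← mul_assoc] at this
  have huz : IsUnit zB := by
    apply IsUnit.of_mul_eq_one (PowerSeries.C (T (-1)))
    rw [zB, ← map_mul, ← T_add]
    norm_num [T_zero]
  have hum : IsUnit ((m' : BH) + 1) := by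
    have h1 : ((m' : ℂ) + 1) ≠ 0 := Nat.cast_add_one_ne_zero m'
    have h2 := (isUnit_iff_ne_zero.mpr h1).map (algebraMap ℂ BH)
    have h3 : algebraMap ℂ BH ((m' : ℂ) + 1) = (m' : BH) + 1 := by
      rw [map_add, map_one, map_natCast]
    rwa [h3] at h2
  have hdvd2 : (zB - 1) ^ (m' + 1) ∣ (zB - 1) ^ m' * g :=
    ((hum.mul huz).dvd_mul_left).mp hdvd
  have hpow_ne : (zB - 1) ^ m' ≠ 0 := pow_ne_zero _ zB_sub_one_ne
  have hdvd3 : (zB - 1) ∣ g := by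
    have h' : (zB - 1) ^ m' * (zB - 1) ∣ (zB - 1) ^ m' * g := by
      rw [← pow_succ]; exact hdvd2
    exact (mul_dvd_mul_iff_left hpow_ne).mp h'
  obtain ⟨g', hg'⟩ := hdvd3
  rw [Ideal.mem_span_singleton]
  exact ⟨g', by rw [hg, hg']; ring⟩

lemma laurent_div (p : LL) (hp : p ≠ 0) : ∃ N : ℕ, ¬ ((T 1 - 1 : LL) ^ N ∣ p) := by
  obtain ⟨a0, P, hP⟩ := LaurentPolynomial.exists_T_pow p
  have hPne : P ≠ 0 := by
    intro h
    rw [h, map_zero] at hP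
    rcases mul_eq_zero.mp hP.symm with h' | h'
    · exact hp h'
    · exact (LaurentPolynomial.isUnit_T _).ne_zero h'
  refine ⟨P.rootMultiplicity 1 + 1, fun hdvd => ?_⟩
  obtain ⟨h, hh⟩ := hdvd
  obtain ⟨b0, H, hH⟩ := LaurentPolynomial.exists_T_pow h
  have key2 : P * Polynomial.X ^ b0 =
      (Polynomial.X - 1) ^ (P.rootMultiplicity 1 + 1) * H * Polynomial.X ^ a0 := by
    apply Polynomial.toLaurent_injective
    rw [map_mul, map_mul, map_mul, map_pow, map_pow, map_pow, map_sub,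
      Polynomial.toLaurent_X, map_one, hP, hH, hh]
    rw [T_pow, mul_one, T_pow, mul_one]
    ring
  have hXne : (Polynomial.X ^ b0 : Polynomial ℂ) ≠ 0 := pow_ne_zero _ Polynomial.X_ne_zero
  have hne2 : P * Polynomial.X ^ b0 ≠ 0 := mul_ne_zero hPne hXne
  have hle : P.rootMultiplicity 1 + 1 ≤ (P * Polynomial.X ^ b0).rootMultiplicity 1 := by
    rw [Polynomial.le_rootMultiplicity_iff hne2, Polynomial.C_1]
    exact ⟨H * Polynomial.X ^ a0, by rw [key2]; ring⟩
  rw [Polynomial.rootMultiplicity_mul hne2] at hle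
  have h0 : (Polynomial.X ^ b0 : Polynomial ℂ).rootMultiplicity 1 = 0 := by
    apply Polynomial.rootMultiplicity_eq_zero
    simp [Polynomial.IsRoot]
  omega

theorem stmt9 (I : Ideal BH)
    (hI2 : I ≤ Ideal.span {(zB - 1) ^ 2})
    (hΔ : ∀ f ∈ I, Δh f ∈ Ideal.span (ι1 '' (I : Set BH)) ⊔ Ideal.span (ι2 '' (I : Set BH))) :
    (∀ n : ℕ, 1 ≤ n → I ≤ Ideal.span {(zB - 1) ^ n}) ∧ I = ⊥ := by
  have hmain : ∀ n : ℕ, 1 ≤ n → I ≤ Ideal.span {(zB - 1) ^ n} := by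
    intro n hn
    induction n, hn using Nat.le_induction with
    | base =>
      exact hI2.trans (Ideal.span_singleton_le_span_singleton.mpr (pow_dvd_pow _ one_le_two))
    | succ m hm ih =>
      obtain ⟨m', rfl⟩ : ∃ m', m = m' + 1 := ⟨m - 1, by omega⟩
      exact main_step I hI2 hΔ m' ih
  refine ⟨hmain, ?_⟩
  rw [eq_bot_iff]
  intro f hf
  rw [Ideal.mem_bot]
  by_contra hne
  obtain ⟨k, hk⟩ : ∃ k, PowerSeries.coeff k f ≠ 0 := by
    by_contra hall
    push_neg at hall
    exact hne (PowerSeries.ext fun n => by rw [hall n, map_zero])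
  obtain ⟨N, hN⟩ := laurent_div _ hk
  apply hN
  have hf' := hmain (N + 1) (by omega) hf
  obtain ⟨h, hh⟩ := Ideal.mem_span_singleton.mp hf'
  have hC : (zB - 1) = PowerSeries.C (T 1 - 1) := by
    rw [map_sub, map_one]
    rfl
  have hco : PowerSeries.coeff k f = (T 1 - 1) ^ (N + 1) * PowerSeries.coeff k h := by
    rw [hh, hC, ← map_pow, PowerSeries.coeff_C_mul]
  exact dvd_trans (pow_dvd_pow _ (Nat.le_succ N)) ⟨_, hco⟩

end
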